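/- Let y : I → ℝ^m be a solution of the system (hcu) on an open interval I. Then the function t ↦ s(t) = 2·Σ_{k=1}^m y_k'(t) − Q(t) − S(t)² is constant on I. -/

import Mathlib

/-- Along any solution of the system (hcu) on an open interval `I`,
the quantity `s(t) = 2·Σ yₖ'(t) − Σ yₖ(t)² − (Σ yₖ(t))²` is constant. -/
theorem stmt_4 (m : ℕ) (hm : 1 ≤ m)
    (I : Set ℝ) (hIopen : IsOpen I) (hIconn : I.OrdConnected)
    (y y' y'' : ℝ → Fin m → ℝ)
    (hy : ∀ j, ∀ t ∈ I, HasDerivAt (fun s => y s j) (y' t j) t)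
    (hy' : ∀ j, ∀ t ∈ I, HasDerivAt (fun s => y' s j) (y'' t j) t)
    (hcu : ∀ j, ∀ t ∈ I,
      y'' t j - ((∑ k, y t k) + y t j) * y' t j
        = y t j * (∑ k, (y t k) ^ 2) - (y t j) ^ 2 * (∑ k, y t k)) :
    ∀ t₁ ∈ I, ∀ t₂ ∈ I,
      2 * (∑ k, y' t₁ k) - (∑ k, (y t₁ k) ^ 2) - (∑ k, y t₁ k) ^ 2
        = 2 * (∑ k, y' t₂ k) - (∑ k, (y t₂ k) ^ 2) - (∑ k, y t₂ k) ^ 2 := by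
  set f : ℝ → ℝ := fun t => 2 * (∑ k, y' t k) - (∑ k, (y t k) ^ 2) - (∑ k, y t k) ^ 2
    with hf
  have hderiv : ∀ t ∈ I, HasDerivAt f 0 t := by
    intro t ht
    have h1 : HasDerivAt (fun s => ∑ k, y' s k) (∑ k, y'' t k) t :=
      HasDerivAt.fun_sum fun k _ => hy' k t ht
    have h2 : HasDerivAt (fun s => ∑ k, (y s k) ^ 2) (∑ k, 2 * y t k * y' t k) t :=
      HasDerivAt.fun_sum fun k _ => by
        simpa [mul_comm, mul_assoc] using (hy k t ht).fun_pow 2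
    have h3 : HasDerivAt (fun s => (∑ k, y s k) ^ 2)
        (2 * (∑ k, y t k) * (∑ k, y' t k)) t := by
      have : HasDerivAt (fun s => ∑ k, y s k) (∑ k, y' t k) t :=
        HasDerivAt.fun_sum fun k _ => hy k t ht
      simpa [mul_comm, mul_assoc] using this.fun_pow 2
    have h := ((h1.const_mul (2 : ℝ)).fun_sub h2).fun_sub h3
    have h4 : ∑ k, y'' t k = (∑ l, y t l) * (∑ k, y' t k) + ∑ k, y t k * y' t k := by
      have step : ∀ k, y'' t k = (∑ l, y t l) * y' t k + y t k * y' t k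
          + y t k * (∑ l, (y t l) ^ 2) - (y t k) ^ 2 * (∑ l, y t l) := fun k => by
        have := hcu k t ht; nlinarith [this]
      calc ∑ k, y'' t k
          = ∑ k, ((∑ l, y t l) * y' t k + y t k * y' t k
              + y t k * (∑ l, (y t l) ^ 2) - (y t k) ^ 2 * (∑ l, y t l)) :=
            Finset.sum_congr rfl fun k _ => step k
        _ = (∑ l, y t l) * (∑ k, y' t k) + ∑ k, y t k * y' t k := by
            simp only [Finset.sum_add_distrib, Finset.sum_sub_distrib, ← Finset.mul_sum,
              ← Finset.sum_mul]
            ring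
    have e : ∑ k, 2 * y t k * y' t k = 2 * ∑ k, y t k * y' t k := by
      rw [Finset.mul_sum]; exact Finset.sum_congr rfl fun k _ => by ring
    have key : 2 * (∑ k, y'' t k) - (∑ k, 2 * y t k * y' t k)
        - 2 * (∑ k, y t k) * (∑ k, y' t k) = 0 := by
      rw [h4, e]; ring
    simpa [hf, key] using h
  intro t₁ ht₁ t₂ ht₂
  have hconv : Convex ℝ I := hIconn.convex
  have := hconv.is_const_of_fderivWithin_eq_zero (𝕜 := ℝ) (f := f)
    (fun t ht => ((hderiv t ht).differentiableAt).differentiableWithinAt)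
    (fun t ht => by
      rw [fderivWithin_of_isOpen hIopen ht]
      exact (hderiv t ht).hasFDerivAt.fderiv.trans (by ext; simp))
    ht₁ ht₂
  simpa [hf] using this
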